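/- For every complex s with Re(s) > 1, s·∫₁^∞ f(x)·x^(−s−1) dx = η(s)/ζ(s), where f(x) = ∑_{k ≤ x} μ(k)·ν(x/k), η is the Dirichlet eta function, and ζ is the Riemann zeta function. -/

import Mathlib

open MeasureTheory ArithmeticFunction Finset

lemma swap_lemma (g : ℕ → ℤ) (n : ℕ) :
    ∑ k ∈ Finset.Icc 1 n, ((n / k : ℕ) : ℤ) * g k
      = ∑ j ∈ Finset.Icc 1 n, ∑ d ∈ j.divisors, g d := by
  induction n with
  | zero => simp
  | succ n ih =>
    have hstep : ∀ k : ℕ, (((n+1) / k : ℕ) : ℤ)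
        = ((n / k : ℕ) : ℤ) + (if k ∣ (n+1) then 1 else 0) := by
      intro k
      rw [Nat.succ_div]
      push_cast
      split <;> simp
    have hdiv : ∑ d ∈ (n+1).divisors, g d
        = ∑ k ∈ Finset.Icc 1 (n+1), (if k ∣ (n+1) then 1 else 0) * g k := by
      rw [Nat.divisors]
      rw [show Finset.Ico 1 (n+1+1) = Finset.Icc 1 (n+1) by rfl]
      rw [Finset.sum_filter]
      congr 1; ext k; split <;> simp
    rw [Finset.sum_Icc_succ_top (by norm_num : (1:ℕ) ≤ n+1),
      Finset.sum_Icc_succ_top (by norm_num : (1:ℕ) ≤ n+1), ← ih]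
    simp only [hstep, add_mul]
    rw [Finset.sum_add_distrib]
    have h0 : ((n / (n+1) : ℕ) : ℤ) = 0 := by
      norm_num [Nat.div_eq_of_lt (Nat.lt_succ_self n)]
    rw [hdiv, Finset.sum_Icc_succ_top (by norm_num : (1:ℕ) ≤ n+1), h0]
    ring

lemma moebius_floor_sum (n : ℕ) (hn : 1 ≤ n) :
    ∑ k ∈ Finset.Icc 1 n, (moebius k : ℤ) * ((n / k : ℕ) : ℤ) = 1 := by
  have h := swap_lemma (fun k => (moebius k : ℤ)) n
  rw [Finset.sum_congr rfl (fun k _ => mul_comm ((moebius k : ℤ)) _), h]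
  have hj : ∀ j ∈ Finset.Icc 1 n, ∑ d ∈ j.divisors, (moebius d : ℤ)
      = if j = 1 then 1 else 0 := by
    intro j hj
    rw [← coe_mul_zeta_apply, moebius_mul_coe_zeta, one_apply]
  rw [Finset.sum_congr rfl hj]
  simp [Finset.sum_ite_eq', hn]

noncomputable def nu (x : ℝ) : ℝ := 2 * Int.fract (x / 2) - Int.fract x

noncomputable def fconv (x : ℝ) : ℝ :=
  ∑ k ∈ Finset.Icc 1 ⌊x⌋₊, (moebius k : ℝ) * nu (x / k)

lemma sum_half (n : ℕ) :
    ∑ k ∈ Finset.Icc 1 n, (moebius k : ℤ) * ((n / 2 / k : ℕ) : ℤ)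
      = if 1 ≤ n / 2 then 1 else 0 := by
  set m := n / 2 with hm
  have hsub : Finset.Icc 1 m ⊆ Finset.Icc 1 n := by
    apply Finset.Icc_subset_Icc le_rfl (Nat.div_le_self n 2)
  rw [← Finset.sum_subset hsub]
  · by_cases h : 1 ≤ m
    · rw [moebius_floor_sum m h]; simp [h]
    · have : m = 0 := by omega
      simp [this]
  · intro k hk hk'
    simp only [Finset.mem_Icc] at hk hk'
    have : m < k := by omega
    rw [Nat.div_eq_of_lt this]
    simp

lemma fconv_eq (x : ℝ) (hx : 1 ≤ x) : fconv x = if x < 2 then 1 else -1 := by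
  set n := ⌊x⌋₊ with hn
  have hn1 : 1 ≤ n := Nat.le_floor (by exact_mod_cast hx)
  have hnu : ∀ k ∈ Finset.Icc 1 n, nu (x / k)
      = ((n / k : ℕ) : ℝ) - 2 * ((n / 2 / k : ℕ) : ℝ) := by
    intro k hk
    simp only [Finset.mem_Icc] at hk
    have hk0 : (0:ℝ) < k := by exact_mod_cast hk.1
    have hy : (0:ℝ) ≤ x / k := by positivity
    have hy2 : (0:ℝ) ≤ x / k / 2 := by positivity
    have h1 : (⌊x / k⌋ : ℝ) = ((n / k : ℕ) : ℝ) := by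
      rw [← natCast_floor_eq_intCast_floor hy, hn, Nat.floor_div_natCast]
    have h2 : (⌊x / k / 2⌋ : ℝ) = ((n / k / 2 : ℕ) : ℝ) := by
      rw [← natCast_floor_eq_intCast_floor hy2, Nat.floor_div_ofNat, hn, Nat.floor_div_natCast]
    have h3 : n / k / 2 = n / 2 / k := by
      rw [Nat.div_div_eq_div_mul, Nat.div_div_eq_div_mul, Nat.mul_comm]
    rw [nu, Int.fract, Int.fract, h1, h2, h3]
    ring
  have key : fconv x = ((∑ k ∈ Finset.Icc 1 n, (moebius k : ℤ) * ((n / k : ℕ) : ℤ) : ℤ) : ℝ)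
      - 2 * ((∑ k ∈ Finset.Icc 1 n, (moebius k : ℤ) * ((n / 2 / k : ℕ) : ℤ) : ℤ) : ℝ) := by
    rw [fconv, ← hn, Finset.sum_congr rfl (fun k hk => by rw [hnu k hk])]
    simp only [Int.cast_sum, Int.cast_mul, Int.cast_natCast]
    rw [Finset.mul_sum, ← Finset.sum_sub_distrib]
    exact Finset.sum_congr rfl fun k _ => by ring
  rw [key, moebius_floor_sum n hn1, sum_half n]
  by_cases h : x < 2
  · have h2 : n < 2 := by
      rw [hn, Nat.floor_lt (by linarith : (0:ℝ) ≤ x)]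
      exact_mod_cast h
    have : n = 1 := by omega
    simp [this, h]
  · have h2 : (2:ℝ) ≤ x := le_of_not_gt h
    have : 2 ≤ n := Nat.le_floor (by exact_mod_cast h2)
    have hm : 1 ≤ n / 2 := by omega
    simp [h, hm]
    norm_num

theorem stmt_9 : ∀ s : ℂ, 1 < s.re →
    s * ∫ x in Set.Ioi (1 : ℝ), (fconv x : ℂ) * (x : ℂ) ^ (-s - 1) =
      (1 - 2 ^ (1 - s)) * riemannZeta s / riemannZeta s := by
  intro s hs
  have hs0 : s ≠ 0 := by
    intro h; rw [h] at hs; simp at hs; linarith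
  have ha : (-s - 1).re < -1 := by
    simp only [Complex.sub_re, Complex.neg_re, Complex.one_re]
    linarith
  set F : ℝ → ℂ := fun x => (fconv x : ℂ) * (x : ℂ) ^ (-s - 1) with hF
  have hint : IntegrableOn (fun x : ℝ => (x : ℂ) ^ (-s - 1)) (Set.Ioi 1) :=
    integrableOn_Ioi_cpow_of_lt ha one_pos
  have hsplit : Set.Ioo (1:ℝ) 2 ∪ Set.Ici 2 = Set.Ioi 1 :=
    Set.Ioo_union_Ici_eq_Ioi one_lt_two
  have heq1 : Set.EqOn (fun x : ℝ => (x : ℂ) ^ (-s - 1)) F (Set.Ioo 1 2) := by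
    intro x hx
    simp only [hF, fconv_eq x hx.1.le, if_pos hx.2]
    norm_num
  have heq2 : Set.EqOn (fun x : ℝ => -(x : ℂ) ^ (-s - 1)) F (Set.Ici 2) := by
    intro x hx
    have hx1 : (1:ℝ) ≤ x := le_trans one_le_two hx
    simp only [hF, fconv_eq x hx1, if_neg (not_lt.mpr (show (2:ℝ) ≤ x from hx))]
    norm_num
  have hi1 : IntegrableOn F (Set.Ioo 1 2) :=
    ((hint.mono_set (Set.Ioo_subset_Ioi_self)).congr_fun heq1 measurableSet_Ioo)
  have hneg : IntegrableOn (fun x : ℝ => -(x : ℂ) ^ (-s - 1)) (Set.Ici 2) :=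
    (hint.mono_set (Set.Ici_subset_Ioi.mpr one_lt_two)).neg
  have hi2 : IntegrableOn F (Set.Ici 2) := hneg.congr_fun heq2 measurableSet_Ici
  have hdisj : Disjoint (Set.Ioo (1:ℝ) 2) (Set.Ici 2) :=
    Set.disjoint_left.mpr fun x hx hx' => absurd hx.2 (not_lt.mpr hx')
  have hI : ∫ x in Set.Ioi (1:ℝ), F x
      = (∫ x in Set.Ioo (1:ℝ) 2, F x) + ∫ x in Set.Ici (2:ℝ), F x := by
    rw [← hsplit, setIntegral_union hdisj measurableSet_Ici hi1 hi2]
  have hv1 : ∫ x in Set.Ioo (1:ℝ) 2, F x = ((2:ℂ) ^ (-s) - 1) / (-s) := by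
    rw [← setIntegral_congr_fun measurableSet_Ioo heq1,
      ← integral_Ioc_eq_integral_Ioo, ← intervalIntegral.integral_of_le one_le_two,
      integral_cpow (Or.inr ⟨by
        intro h
        have := congrArg Complex.re h
        simp only [Complex.sub_re, Complex.neg_re, Complex.one_re, Complex.neg_re] at this
        linarith, by norm_num⟩)]
    norm_num
  have hv2 : ∫ x in Set.Ici (2:ℝ), F x = (2:ℂ) ^ (-s) / (-s) := by
    rw [← setIntegral_congr_fun measurableSet_Ici heq2, integral_Ici_eq_integral_Ioi,
      integral_neg, integral_Ioi_cpow_of_lt ha (by norm_num)]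
    norm_num
    rw [div_neg]
  rw [hI, hv1, hv2, mul_div_assoc,
    div_self (riemannZeta_ne_zero_of_one_lt_re hs), mul_one]
  have h2 : (2:ℂ) ^ (1 - s) = 2 * (2:ℂ) ^ (-s) := by
    rw [show (1:ℂ) - s = 1 + (-s) by ring, Complex.cpow_add _ _ two_ne_zero,
      Complex.cpow_one]
  rw [h2]
  field_simp [hs0]
  ring
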